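/- For the symmetric advection system ẋ = (G₃ − G̃₃)(x) on an even number N of cyclic sites, the energy at the even sites ∑_j x_{2j}(t)² and the energy at the odd sites ∑_j x_{2j+1}(t)² are each conserved along solutions. -/

import Mathlib

private lemma shift_parity {N : ℕ} (hN : 6 ≤ N) (hE : Even N) [NeZero N] (i : ZMod N) :
    Even ((i + 2 : ZMod N)).val ↔ Even i.val := by
  have h2 : (2 : ZMod N).val = 2 := by
    have h : ((2 : ℕ) : ZMod N) = 2 := by push_cast; ring
    rw [← h, ZMod.val_natCast, Nat.mod_eq_of_lt (by omega)]
  obtain ⟨k, hk⟩ := hE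
  have hdvd : (2 : ℕ) ∣ N := ⟨k, by omega⟩
  rw [ZMod.val_add, h2, Nat.even_iff, Nat.even_iff, Nat.mod_mod_of_dvd _ hdvd]
  omega

private lemma sum_shift_zero {N : ℕ} [NeZero N] (g : ZMod N → ℝ) (P : ZMod N → Prop)
    [DecidablePred P] (hP : ∀ i, P (i + 2) ↔ P i) :
    ∑ i : ZMod N, (if P i then g i - g (i - 2) else 0) = 0 := by
  have h1 : ∑ i : ZMod N, (if P i then g (i - 2) else 0)
      = ∑ i : ZMod N, (if P i then g i else 0) := by
    have := Fintype.sum_equiv (Equiv.addRight (2 : ZMod N))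
      (fun i => if P (i + 2) then g (i + 2 - 2) else 0)
      (fun i => if P i then g (i - 2) else 0) (fun i => rfl)
    rw [← this]
    refine Finset.sum_congr rfl fun i _ => ?_
    simp only [hP, add_sub_cancel_right]
  have h2 : ∀ i : ZMod N, (if P i then g i - g (i - 2) else 0)
      = (if P i then g i else 0) - (if P i then g (i - 2) else 0) := by
    intro i; split <;> simp
  simp only [h2, Finset.sum_sub_distrib, h1, sub_self]

private lemma conserved {N : ℕ} (hN : 6 ≤ N) (hE : Even N) [NeZero N]
    (x : ℝ → ZMod N → ℝ)
    (hx : ∀ (t : ℝ) (i : ZMod N),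
      HasDerivAt (fun s => x s i)
        (x t (i - 1) * (x t (i + 1) - x t (i - 2))
          - x t (i + 1) * (x t (i - 1) - x t (i + 2))) t)
    (P : ZMod N → Prop) [DecidablePred P] (hP : ∀ i, P (i + 2) ↔ P i) :
    ∀ s t : ℝ, ∑ i : ZMod N, (if P i then x s i ^ 2 else 0)
      = ∑ i : ZMod N, (if P i then x t i ^ 2 else 0) := by
  have key : ∀ t : ℝ,
      HasDerivAt (fun s => ∑ i : ZMod N, (if P i then x s i ^ 2 else 0)) 0 t := by
    intro t
    have h := HasDerivAt.sum (x := t) (u := (Finset.univ : Finset (ZMod N)))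
      (A := fun i s => if P i then x s i ^ 2 else 0)
      (A' := fun i => if P i then
        (2 : ℕ) * x t i ^ 1 * (x t (i - 1) * (x t (i + 1) - x t (i - 2))
          - x t (i + 1) * (x t (i - 1) - x t (i + 2))) else 0)
      (fun i _ => by
        by_cases hp : P i
        · simp only [if_pos hp]
          exact (hx t i).pow 2
        · simp only [if_neg hp]
          exact hasDerivAt_const t 0)
    have hzero : (∑ i : ZMod N, if P i then
        (2 : ℕ) * x t i ^ 1 * (x t (i - 1) * (x t (i + 1) - x t (i - 2))
          - x t (i + 1) * (x t (i - 1) - x t (i + 2))) else 0) = 0 := by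
      set g : ZMod N → ℝ := fun i => x t i * x t (i + 1) * x t (i + 2) with hg
      have step : ∀ i : ZMod N, (if P i then
          (2 : ℕ) * x t i ^ 1 * (x t (i - 1) * (x t (i + 1) - x t (i - 2))
            - x t (i + 1) * (x t (i - 1) - x t (i + 2))) else 0)
          = 2 * (if P i then g i - g (i - 2) else 0) := by
        intro i
        have e1 : i - 2 + 1 = i - 1 := by ring
        have e2 : i - 2 + 2 = i := by ring
        split
        · simp only [hg, e1, e2]
          push_cast
          ring
        · ring
      simp only [step, ← Finset.mul_sum, sum_shift_zero g P hP, mul_zero]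
    rw [hzero, Finset.sum_fn] at h
    exact h
  intro s t
  exact is_const_of_deriv_eq_zero (fun u => (key u).differentiableAt)
    (fun u => (key u).deriv) s t

theorem symmetric_advection_even_odd_energy (N : ℕ) (hN : 6 ≤ N) (hEven : Even N)
    [NeZero N] (x : ℝ → ZMod N → ℝ)
    (hx : ∀ (t : ℝ) (i : ZMod N),
      HasDerivAt (fun s => x s i)
        (x t (i - 1) * (x t (i + 1) - x t (i - 2))
          - x t (i + 1) * (x t (i - 1) - x t (i + 2))) t) :
    (∀ s t : ℝ,
      ∑ i : ZMod N, (if Even i.val then x s i ^ 2 else 0)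
        = ∑ i : ZMod N, (if Even i.val then x t i ^ 2 else 0)) ∧
    (∀ s t : ℝ,
      ∑ i : ZMod N, (if ¬ Even i.val then x s i ^ 2 else 0)
        = ∑ i : ZMod N, (if ¬ Even i.val then x t i ^ 2 else 0)) := by
  constructor
  · exact conserved hN hEven x hx (fun i => Even i.val)
      (fun i => shift_parity hN hEven i)
  · exact conserved hN hEven x hx (fun i => ¬ Even i.val)
      (fun i => not_congr (shift_parity hN hEven i))
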